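/- Let f(X) = a₀ + a₁X + ⋯ + a_nXⁿ be a polynomial with real coefficients satisfying 0 < a₀ ≤ a₁ ≤ ⋯ ≤ a_n. Then every complex root of f has absolute value at most 1. -/

import Mathlib

open Polynomial Real

noncomputable section

/-- `d` is an admissible divisor of `f(a)`. -/
def AdmDiv (f : Polynomial ℤ) (a d : ℤ) : Prop :=
  d ∣ f.eval a ∧
    Int.gcd d (f.eval a / d) ∣ Int.gcd (f.eval a) (f.derivative.eval a)

/-- `d` is a unitary divisor of `N`. -/
def UnitDiv (N d : ℤ) : Prop := d ∣ N ∧ Int.gcd d (N / d) = 1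

/-- `f` is a product of at most `k` nonconstant irreducible factors over `ℚ`
(counting multiplicities): it cannot be written as a product of `k + 1`
nonconstant polynomials over `ℚ`. -/
def FactorsAtMost (f : Polynomial ℤ) (k : ℕ) : Prop :=
  ∀ g : Fin (k + 1) → Polynomial ℚ, (∀ i, 0 < (g i).natDegree) →
    f.map (Int.castRingHom ℚ) ≠ ∏ i, g i

/-- `q` is the quantity `q_k` of the paper: the greatest ratio `d₂/d₁` of
admissible divisors of `f(b)` and `f(a)` not exceeding `(|f(b)|/|f(a)|)^(1/(k+1))`. -/
def IsQk (f : Polynomial ℤ) (a b : ℤ) (k : ℕ) (q : ℝ) : Prop :=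
  IsGreatest {x : ℝ | ∃ d₁ d₂ : ℤ, AdmDiv f a d₁ ∧ AdmDiv f b d₂ ∧
    x = (d₂ : ℝ) / (d₁ : ℝ) ∧
    x ≤ (|((f.eval b : ℤ) : ℝ)| / |((f.eval a : ℤ) : ℝ)|) ^ ((k + 1 : ℝ))⁻¹} q

/-- `q` is the quantity `q^u_k` of the paper, defined via unitary divisors. -/
def IsQuk (f : Polynomial ℤ) (a b : ℤ) (k : ℕ) (q : ℝ) : Prop :=
  IsGreatest {x : ℝ | ∃ d₁ d₂ : ℤ, UnitDiv (f.eval a) d₁ ∧ UnitDiv (f.eval b) d₂ ∧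
    x = (d₂ : ℝ) / (d₁ : ℝ) ∧
    x ≤ (|((f.eval b : ℤ) : ℝ)| / |((f.eval a : ℤ) : ℝ)|) ^ ((k + 1 : ℝ))⁻¹} q

theorem stmt11 (f : Polynomial ℝ) (h0 : 0 < f.coeff 0)
    (hmono : ∀ i < f.natDegree, f.coeff i ≤ f.coeff (i + 1)) :
    ∀ z : ℂ, aeval z f = 0 → ‖z‖ ≤ 1 := by
  intro z hz
  by_contra hr
  push_neg at hr
  set n := f.natDegree with hn
  set a : ℕ → ℝ := fun i => f.coeff i with ha
  set r := ‖z‖ with hrdef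
  have hr0 : (0:ℝ) < r := lt_trans one_pos hr
  -- positivity of coefficients
  have hpos : ∀ i, i ≤ n → 0 < a i := by
    intro i hi
    induction i with
    | zero => exact h0
    | succ k ih =>
        exact lt_of_lt_of_le (ih (le_of_lt (Nat.lt_of_succ_le hi)))
          (hmono k (Nat.lt_of_succ_le hi))
  -- the shifted coefficients
  set c : ℕ → ℝ := fun i => if i = 0 then 0 else a (i - 1) with hc
  set b : ℕ → ℝ := fun i => a i - c i with hb
  have hbnn : ∀ i, i ≤ n → 0 ≤ b i := by
    intro i hi
    cases i with
    | zero => simp [hb, hc]; exact le_of_lt h0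
    | succ k =>
        simp only [hb, hc, Nat.succ_ne_zero, if_false, Nat.succ_sub_one]
        exact sub_nonneg.2 (hmono k (Nat.lt_of_succ_le hi))
  have hbsum : ∑ i ∈ Finset.range (n + 1), b i = a n := by
    have : ∀ i, b i = c (i + 1) - c i := by
      intro i; simp [hb, hc]
    simp only [this]
    rw [Finset.sum_range_sub c (n + 1)]
    simp [hc]
  -- the evaluation as a sum
  have hS : ∑ i ∈ Finset.range (n + 1), (a i : ℂ) * z ^ i = 0 := by
    rw [← hz, Polynomial.aeval_eq_sum_range]
    refine Finset.sum_congr rfl fun i _ => ?_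
    rw [Complex.real_smul]
  -- key identity
  have hkey : ∑ i ∈ Finset.range (n + 1), (b i : ℂ) * z ^ i = (a n : ℂ) * z ^ (n + 1) := by
    have h1 : ∑ i ∈ Finset.range (n + 1), (b i : ℂ) * z ^ i
        = (∑ i ∈ Finset.range (n + 1), (a i : ℂ) * z ^ i)
          - ∑ i ∈ Finset.range (n + 1), (c i : ℂ) * z ^ i := by
      rw [← Finset.sum_sub_distrib]
      refine Finset.sum_congr rfl fun i _ => ?_
      simp [hb]; ring
    have h2 : ∑ i ∈ Finset.range (n + 1), (c i : ℂ) * z ^ i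
        = z * ∑ i ∈ Finset.range n, (a i : ℂ) * z ^ i := by
      rw [Finset.sum_range_succ' (fun i => (c i : ℂ) * z ^ i) n]
      simp only [hc, Nat.succ_ne_zero, if_false, Nat.succ_sub_one, if_true,
        Complex.ofReal_zero, zero_mul, pow_zero, add_zero]
      rw [Finset.mul_sum]
      refine Finset.sum_congr rfl fun i _ => ?_
      ring
    have h3 : ∑ i ∈ Finset.range n, (a i : ℂ) * z ^ i = -((a n : ℂ) * z ^ n) := by
      have := Finset.sum_range_succ (fun i => (a i : ℂ) * z ^ i) n
      rw [hS] at this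
      linear_combination -this
    rw [h1, h2, h3, hS]
    ring
  -- the inequality
  have habs : a n * r ^ (n + 1) ≤ a n * r ^ n := by
    have hL : a n * r ^ (n + 1) = ‖∑ i ∈ Finset.range (n + 1), (b i : ℂ) * z ^ i‖ := by
      rw [hkey, norm_mul, norm_pow, Complex.norm_real, Real.norm_eq_abs,
        abs_of_pos (hpos n le_rfl)]
    rw [hL]
    calc ‖∑ i ∈ Finset.range (n + 1), (b i : ℂ) * z ^ i‖
        ≤ ∑ i ∈ Finset.range (n + 1), ‖(b i : ℂ) * z ^ i‖ :=
          norm_sum_le _ _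
      _ ≤ ∑ i ∈ Finset.range (n + 1), b i * r ^ n := by
          refine Finset.sum_le_sum fun i hi => ?_
          have hin : i ≤ n := Nat.lt_succ_iff.mp (Finset.mem_range.mp hi)
          rw [norm_mul, norm_pow, Complex.norm_real, Real.norm_eq_abs, abs_of_nonneg (hbnn i hin)]
          exact mul_le_mul_of_nonneg_left
            (pow_le_pow_right₀ (le_of_lt hr) hin) (hbnn i hin)
      _ = a n * r ^ n := by rw [← Finset.sum_mul, hbsum]
  have hlt : a n * r ^ n < a n * r ^ (n + 1) := by
    have : r ^ n < r ^ (n + 1) := by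
      rw [pow_succ]
      nlinarith [pow_pos hr0 n]
    exact mul_lt_mul_of_pos_left this (hpos n le_rfl)
  linarith
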